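/- Privacy amplification by subsampling (remove/add relation, pure ε for simplicity): if M is an (ε, δ)-DP mechanism and S is the Poisson subsampling operation that includes each record independently with probability γ, then M ∘ S is (log(1 + γ(e^ε − 1)), γδ)-DP with respect to the remove/add relation. -/

import Mathlib

open MeasureTheory
open scoped ENNReal

/-- Privacy amplification by Poisson subsampling (remove/add relation):
if `M` is `(ε,δ)`-DP with respect to the remove/add relation on multiset
datasets, and `S` is Poisson subsampling which includes each record
independently with probability `γ` (characterized by
`S(x ::ₘ D) = (1−γ)·S(D) + γ·(x ::ₘ ·)∗S(D)`), then the subsampled mechanism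
`D ↦ M(S(D))` is `(log(1 + γ(e^ε − 1)), γδ)`-DP. -/
theorem poisson_subsampling_amplification
    {α : Type*} {R : Type*} [MeasurableSpace R]
    (γ ε δ : ℝ) (hγ0 : 0 < γ) (hγ1 : γ < 1) (hε : 0 ≤ ε) (hδ : 0 ≤ δ) :
    letI : MeasurableSpace (Multiset α) := ⊤
    ∀ (M : Multiset α → Measure R)
      (_ : ∀ Dat, IsProbabilityMeasure (M Dat)) (_ : Measurable M)
      (S : Multiset α → Measure (Multiset α))
      (_ : ∀ Dat, IsProbabilityMeasure (S Dat))
      (_ : ∀ (Dat : Multiset α) (x : α),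
        S (x ::ₘ Dat) = ENNReal.ofReal (1 - γ) • S Dat
          + ENNReal.ofReal γ • (S Dat).map (fun B => x ::ₘ B))
      (_ : ∀ (Dat : Multiset α) (x : α), ∀ E : Set R, MeasurableSet E →
        M (x ::ₘ Dat) E ≤ ENNReal.ofReal (Real.exp ε) * M Dat E + ENNReal.ofReal δ
        ∧ M Dat E ≤ ENNReal.ofReal (Real.exp ε) * M (x ::ₘ Dat) E + ENNReal.ofReal δ),
    ∀ (Dat : Multiset α) (x : α), ∀ E : Set R, MeasurableSet E →
      ((S (x ::ₘ Dat)).bind M) E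
        ≤ ENNReal.ofReal (Real.exp (Real.log (1 + γ * (Real.exp ε - 1))))
            * ((S Dat).bind M) E + ENNReal.ofReal (γ * δ)
      ∧ ((S Dat).bind M) E
        ≤ ENNReal.ofReal (Real.exp (Real.log (1 + γ * (Real.exp ε - 1))))
            * ((S (x ::ₘ Dat)).bind M) E + ENNReal.ofReal (γ * δ) := by
  letI : MeasurableSpace (Multiset α) := ⊤
  intro M hMp hMm S hSp hSrec hDP Dat x E hE
  have hEexp : (1:ℝ) ≤ Real.exp ε := Real.one_le_exp hε
  have hcpos : 0 < 1 + γ * (Real.exp ε - 1) := by nlinarith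
  rw [Real.exp_log hcpos]
  set ν := S Dat with hν
  haveI := hSp Dat
  set a := ∫⁻ B, M B E ∂ν with ha
  set b := ∫⁻ B, M (x ::ₘ B) E ∂ν with hbdef
  have hRHS : (ν.bind M) E = a := Measure.bind_apply hE hMm.aemeasurable
  have hLHS : ((S (x ::ₘ Dat)).bind M) E
      = ENNReal.ofReal (1 - γ) * a + ENNReal.ofReal γ * b := by
    rw [hSrec Dat x, Measure.bind_apply hE hMm.aemeasurable, lintegral_add_measure,
      lintegral_smul_measure, lintegral_smul_measure,
      lintegral_map (f := fun B => (M B) E) (g := fun B : Multiset α => x ::ₘ B)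
        measurable_from_top measurable_from_top, smul_eq_mul, smul_eq_mul]
  rw [hLHS, hRHS]
  -- integrated DP inequalities
  have hone : ∀ (c : ℝ≥0∞), ∫⁻ _, c ∂ν = c := by
    intro c; rw [lintegral_const, measure_univ, mul_one]
  have hb : b ≤ ENNReal.ofReal (Real.exp ε) * a + ENNReal.ofReal δ := by
    calc b ≤ ∫⁻ B, (ENNReal.ofReal (Real.exp ε) * M B E + ENNReal.ofReal δ) ∂ν :=
          lintegral_mono fun B => (hDP B x E hE).1
      _ = ENNReal.ofReal (Real.exp ε) * a + ENNReal.ofReal δ := by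
          rw [lintegral_add_right _ measurable_const,
            lintegral_const_mul _ measurable_from_top, hone]
  have hA : a ≤ ENNReal.ofReal (Real.exp ε) * b + ENNReal.ofReal δ := by
    calc a ≤ ∫⁻ B, (ENNReal.ofReal (Real.exp ε) * M (x ::ₘ B) E + ENNReal.ofReal δ) ∂ν :=
          lintegral_mono fun B => (hDP B x E hE).2
      _ = ENNReal.ofReal (Real.exp ε) * b + ENNReal.ofReal δ := by
          rw [lintegral_add_right _ measurable_const,
            lintegral_const_mul _ measurable_from_top, hone]
  set c : ℝ := 1 + γ * (Real.exp ε - 1) with hc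
  constructor
  · calc ENNReal.ofReal (1 - γ) * a + ENNReal.ofReal γ * b
        ≤ ENNReal.ofReal (1 - γ) * a
            + ENNReal.ofReal γ * (ENNReal.ofReal (Real.exp ε) * a + ENNReal.ofReal δ) := by
          gcongr
      _ = (ENNReal.ofReal (1 - γ) + ENNReal.ofReal γ * ENNReal.ofReal (Real.exp ε)) * a
            + ENNReal.ofReal γ * ENNReal.ofReal δ := by ring
      _ = ENNReal.ofReal c * a + ENNReal.ofReal (γ * δ) := by
          rw [← ENNReal.ofReal_mul hγ0.le, ← ENNReal.ofReal_mul hγ0.le,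
            ← ENNReal.ofReal_add (by linarith) (by positivity)]
          congr 1
          congr 1
          exact congrArg ENNReal.ofReal (by rw [hc]; ring)
  · set k : ℝ≥0∞ := ENNReal.ofReal (γ * c * Real.exp (-ε)) with hk
    have h1 : (1:ℝ≥0∞) ≤ ENNReal.ofReal c * ENNReal.ofReal (1 - γ) + k := by
      rw [hk, ← ENNReal.ofReal_mul (by positivity),
        ← ENNReal.ofReal_add (by nlinarith) (by positivity), ENNReal.one_le_ofReal]
      have hEF : Real.exp ε * Real.exp (-ε) = 1 := by
        rw [← Real.exp_add]; simp
      have h4 : c * (1 - γ) * Real.exp ε + γ * c - Real.exp ε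
          = γ * (1 - γ) * (Real.exp ε - 1) ^ 2 := by rw [hc]; ring
      have h5 : Real.exp ε ≤ c * (1 - γ) * Real.exp ε + γ * c := by
        nlinarith [mul_nonneg (mul_nonneg hγ0.le (by linarith : (0:ℝ) ≤ 1 - γ))
          (sq_nonneg (Real.exp ε - 1))]
      calc (1:ℝ) = Real.exp ε * Real.exp (-ε) := hEF.symm
        _ ≤ (c * (1 - γ) * Real.exp ε + γ * c) * Real.exp (-ε) :=
            mul_le_mul_of_nonneg_right h5 (Real.exp_pos (-ε)).le
        _ = c * (1 - γ) * (Real.exp ε * Real.exp (-ε)) + γ * c * Real.exp (-ε) := by ring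
        _ = c * (1 - γ) + γ * c * Real.exp (-ε) := by rw [hEF]; ring
    have h2 : k * ENNReal.ofReal (Real.exp ε) = ENNReal.ofReal c * ENNReal.ofReal γ := by
      rw [hk, ← ENNReal.ofReal_mul (by positivity), ← ENNReal.ofReal_mul hcpos.le]
      congr 1
      rw [mul_assoc, mul_assoc, ← Real.exp_add]
      simp [mul_comm]
    have h3 : k * ENNReal.ofReal δ ≤ ENNReal.ofReal (γ * δ) := by
      rw [hk, ← ENNReal.ofReal_mul (by positivity)]
      apply ENNReal.ofReal_le_ofReal
      have hEF : Real.exp ε * Real.exp (-ε) = 1 := by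
        rw [← Real.exp_add]; simp
      have hce : c * Real.exp (-ε) ≤ 1 := by
        have h6 : c ≤ Real.exp ε := by
          have := mul_nonneg (by linarith : (0:ℝ) ≤ 1 - γ)
            (by linarith : (0:ℝ) ≤ Real.exp ε - 1)
          rw [hc]; nlinarith
        calc c * Real.exp (-ε) ≤ Real.exp ε * Real.exp (-ε) :=
              mul_le_mul_of_nonneg_right h6 (Real.exp_pos (-ε)).le
          _ = 1 := hEF
      calc γ * c * Real.exp (-ε) * δ = γ * δ * (c * Real.exp (-ε)) := by ring
        _ ≤ γ * δ * 1 := by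
            apply mul_le_mul_of_nonneg_left hce (by positivity)
        _ = γ * δ := mul_one _
    calc a = 1 * a := (one_mul a).symm
      _ ≤ (ENNReal.ofReal c * ENNReal.ofReal (1 - γ) + k) * a := by gcongr
      _ = ENNReal.ofReal c * (ENNReal.ofReal (1 - γ) * a) + k * a := by ring
      _ ≤ ENNReal.ofReal c * (ENNReal.ofReal (1 - γ) * a)
            + k * (ENNReal.ofReal (Real.exp ε) * b + ENNReal.ofReal δ) := by gcongr
      _ = ENNReal.ofReal c * (ENNReal.ofReal (1 - γ) * a)
            + (k * ENNReal.ofReal (Real.exp ε)) * b + k * ENNReal.ofReal δ := by ring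
      _ = ENNReal.ofReal c * (ENNReal.ofReal (1 - γ) * a)
            + (ENNReal.ofReal c * ENNReal.ofReal γ) * b + k * ENNReal.ofReal δ := by rw [h2]
      _ ≤ ENNReal.ofReal c * (ENNReal.ofReal (1 - γ) * a)
            + (ENNReal.ofReal c * ENNReal.ofReal γ) * b + ENNReal.ofReal (γ * δ) := by gcongr
      _ = ENNReal.ofReal c * (ENNReal.ofReal (1 - γ) * a + ENNReal.ofReal γ * b)
            + ENNReal.ofReal (γ * δ) := by ring
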